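/- For box parameters L ≥ 0, q₀ > 0, h > q₀, θ, α ∈ ℝ, let a(z), b(z) be the explicit box scattering coefficients and ρ(z) = b(z)/a(z) the reflection coefficient, and set μ₀ = √(h² − q₀²) and C± = ∓ sin θ · cosh(2Lμ₀) + (h cos α − q₀ cos θ)·sinh(2Lμ₀)/μ₀. If C₊ ≠ 0, then lim_{z→q₀} ρ(z) = −i e^{−iθ}; if C₋ ≠ 0, then lim_{z→−q₀} ρ(z) = i e^{−iθ}. That is, ρ(±q₀) = ∓ i e^{−iθ}. -/

import Mathlib

open Complex Topology Filter

/-- `k(z) = (z + q₀²/z)/2`. -/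
noncomputable def kk (q₀ z : ℝ) : ℝ := (z + q₀ ^ 2 / z) / 2

/-- `λ(z) = (z − q₀²/z)/2`. -/
noncomputable def lam (q₀ z : ℝ) : ℝ := (z - q₀ ^ 2 / z) / 2

/-- The explicit box scattering coefficient `a(z)`, for a choice `μ` of square root of
`k(z)² − h²`. -/
noncomputable def aBox (L q₀ h θ α : ℝ) (μ : ℝ → ℂ) (z : ℝ) : ℂ :=
  1 / ((lam q₀ z : ℂ) * μ z) *
    Complex.exp (Complex.I * ((2 * L * lam q₀ z + θ : ℝ) : ℂ)) *
    (μ z * Complex.cos (2 * (L : ℂ) * μ z) *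
        ((lam q₀ z : ℂ) * (Real.cos θ : ℂ) - Complex.I * (kk q₀ z : ℂ) * (Real.sin θ : ℂ)) +
      Complex.I * Complex.sin (2 * (L : ℂ) * μ z) *
        (((h * q₀ * Real.cos α : ℝ) : ℂ) -
          (kk q₀ z : ℂ) *
            ((kk q₀ z : ℂ) * (Real.cos θ : ℂ) -
              Complex.I * (lam q₀ z : ℂ) * (Real.sin θ : ℂ))))

/-- The explicit box scattering coefficient `b(z)`, for a choice `μ` of square root of
`k(z)² − h²`. -/
noncomputable def bBox (L q₀ h θ α : ℝ) (μ : ℝ → ℂ) (z : ℝ) : ℂ :=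
  1 / ((lam q₀ z : ℂ) * μ z) *
    (-(q₀ : ℂ) * μ z * (Real.sin θ : ℂ) * Complex.cos (2 * (L : ℂ) * μ z) +
      (((h * kk q₀ z * Real.cos α - kk q₀ z * q₀ * Real.cos θ : ℝ) : ℂ) -
          Complex.I * (h : ℂ) * (lam q₀ z : ℂ) * (Real.sin α : ℂ)) *
        Complex.sin (2 * (L : ℂ) * μ z))

/-- `μ₀ = √(h² − q₀²)`. -/
noncomputable def mu0 (q₀ h : ℝ) : ℝ := Real.sqrt (h ^ 2 - q₀ ^ 2)

/-- `C₊ = −sin θ·cosh(2Lμ₀) + (h cos α − q₀ cos θ)·sinh(2Lμ₀)/μ₀`. -/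
noncomputable def CPlus (L q₀ h θ α : ℝ) : ℝ :=
  -Real.sin θ * Real.cosh (2 * L * mu0 q₀ h) +
    (h * Real.cos α - q₀ * Real.cos θ) * Real.sinh (2 * L * mu0 q₀ h) / mu0 q₀ h

/-- `C₋ = sin θ·cosh(2Lμ₀) + (h cos α − q₀ cos θ)·sinh(2Lμ₀)/μ₀`. -/
noncomputable def CMinus (L q₀ h θ α : ℝ) : ℝ :=
  Real.sin θ * Real.cosh (2 * L * mu0 q₀ h) +
    (h * Real.cos α - q₀ * Real.cos θ) * Real.sinh (2 * L * mu0 q₀ h) / mu0 q₀ h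

noncomputable def nuB (q₀ h z : ℝ) : ℂ := Complex.I * (Real.sqrt (h ^ 2 - kk q₀ z ^ 2) : ℝ)

noncomputable def ABr (L q₀ h θ α z : ℝ) : ℂ :=
  nuB q₀ h z * Complex.cos (2 * (L : ℂ) * nuB q₀ h z) *
      ((lam q₀ z : ℂ) * (Real.cos θ : ℂ) - Complex.I * (kk q₀ z : ℂ) * (Real.sin θ : ℂ)) +
    Complex.I * Complex.sin (2 * (L : ℂ) * nuB q₀ h z) *
      (((h * q₀ * Real.cos α : ℝ) : ℂ) -
        (kk q₀ z : ℂ) * ((kk q₀ z : ℂ) * (Real.cos θ : ℂ) -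
          Complex.I * (lam q₀ z : ℂ) * (Real.sin θ : ℂ)))

noncomputable def BBr (L q₀ h θ α z : ℝ) : ℂ :=
  -(q₀ : ℂ) * nuB q₀ h z * (Real.sin θ : ℂ) * Complex.cos (2 * (L : ℂ) * nuB q₀ h z) +
    (((h * kk q₀ z * Real.cos α - kk q₀ z * q₀ * Real.cos θ : ℝ) : ℂ) -
        Complex.I * (h : ℂ) * (lam q₀ z : ℂ) * (Real.sin α : ℂ)) *
      Complex.sin (2 * (L : ℂ) * nuB q₀ h z)

lemma ratio_eq (L q₀ h θ α : ℝ) (μ : ℝ → ℂ)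
    (z : ℝ) (hz : z ≠ 0) (hsq : (μ z) ^ 2 = (kk q₀ z : ℂ) ^ 2 - (h : ℂ) ^ 2)
    (hk : kk q₀ z ^ 2 < h ^ 2) (hlam : lam q₀ z ≠ 0) :
    bBox L q₀ h θ α μ z / aBox L q₀ h θ α μ z
      = BBr L q₀ h θ α z / ABr L q₀ h θ α z *
        Complex.exp (-(Complex.I * ((2 * L * lam q₀ z + θ : ℝ) : ℂ))) := by
  have hroot : (0:ℝ) < Real.sqrt (h ^ 2 - kk q₀ z ^ 2) :=
    Real.sqrt_pos.2 (by linarith)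
  set ν : ℂ := nuB q₀ h z with hνdef
  have hν2 : ν ^ 2 = (kk q₀ z : ℂ) ^ 2 - (h : ℂ) ^ 2 := by
    rw [hνdef]
    unfold nuB
    rw [mul_pow, Complex.I_sq, ← Complex.ofReal_pow,
      Real.sq_sqrt (by linarith : (0:ℝ) ≤ h ^ 2 - kk q₀ z ^ 2)]
    push_cast
    ring
  have hνne : ν ≠ 0 := by
    rw [hνdef]; unfold nuB
    exact mul_ne_zero Complex.I_ne_zero (Complex.ofReal_ne_zero.2 hroot.ne')
  have hcases : μ z = ν ∨ μ z = -ν := by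
    have h0 : (μ z - ν) * (μ z + ν) = 0 := by
      have h1 : μ z ^ 2 = ν ^ 2 := by rw [hsq, hν2]
      linear_combination h1
    rcases mul_eq_zero.mp h0 with h0 | h0
    · exact Or.inl (sub_eq_zero.mp h0)
    · exact Or.inr (eq_neg_of_add_eq_zero_left h0)
  have ha : aBox L q₀ h θ α μ z =
      1 / ((lam q₀ z : ℂ) * ν) * Complex.exp (Complex.I * ((2 * L * lam q₀ z + θ : ℝ) : ℂ)) *
        ABr L q₀ h θ α z := by
    unfold aBox ABr
    rcases hcases with hc | hc <;> rw [hc]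
    rw [show 2 * (L : ℂ) * -ν = -(2 * (L:ℂ) * ν) by ring, Complex.cos_neg, Complex.sin_neg]
    rw [hνdef]
    field_simp
    ring
  have hb : bBox L q₀ h θ α μ z =
      1 / ((lam q₀ z : ℂ) * ν) * BBr L q₀ h θ α z := by
    unfold bBox BBr
    rcases hcases with hc | hc <;> rw [hc]
    rw [show 2 * (L : ℂ) * -ν = -(2 * (L:ℂ) * ν) by ring, Complex.cos_neg, Complex.sin_neg]
    rw [hνdef]
    field_simp
    ring
  rw [ha, hb, Complex.exp_neg]
  have hlc : ((lam q₀ z : ℝ) : ℂ) ≠ 0 := Complex.ofReal_ne_zero.2 hlam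
  have hp : ((lam q₀ z : ℂ) * ν) ≠ 0 := mul_ne_zero hlc hνne
  rw [mul_assoc (1 / ((lam q₀ z : ℂ) * ν)),
    mul_div_mul_left _ _ (one_div_ne_zero hp), div_mul_eq_div_div_swap, div_eq_mul_inv]

lemma kk_self (q₀ : ℝ) (hq : q₀ ≠ 0) : kk q₀ q₀ = q₀ := by
  unfold kk; rw [sq, mul_div_assoc, div_self hq, mul_one]; ring

lemma kk_neg_self (q₀ : ℝ) (hq : q₀ ≠ 0) : kk q₀ (-q₀) = -q₀ := by
  unfold kk; rw [div_neg, sq, mul_div_assoc, div_self hq, mul_one]; ring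

lemma lam_self (q₀ : ℝ) (hq : q₀ ≠ 0) : lam q₀ q₀ = 0 := by
  unfold lam; rw [sq, mul_div_assoc, div_self hq, mul_one]; ring

lemma lam_neg_self (q₀ : ℝ) (hq : q₀ ≠ 0) : lam q₀ (-q₀) = 0 := by
  unfold lam; rw [div_neg, sq, mul_div_assoc, div_self hq, mul_one]; ring

lemma mu0_pos (q₀ h : ℝ) (hq₀ : 0 < q₀) (hh : q₀ < h) : 0 < mu0 q₀ h :=
  Real.sqrt_pos.2 (by nlinarith)

lemma CPlus_aux (L q₀ h θ α : ℝ) (hq₀ : 0 < q₀) (hh : q₀ < h) :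
    q₀ * (mu0 q₀ h * CPlus L q₀ h θ α) =
      q₀ * (-Real.sin θ * Real.cosh (2 * L * mu0 q₀ h) * mu0 q₀ h +
        (h * Real.cos α - q₀ * Real.cos θ) * Real.sinh (2 * L * mu0 q₀ h)) := by
  have hm := (mu0_pos q₀ h hq₀ hh).ne'
  unfold CPlus; field_simp

lemma CMinus_aux (L q₀ h θ α : ℝ) (hq₀ : 0 < q₀) (hh : q₀ < h) :
    q₀ * (mu0 q₀ h * CMinus L q₀ h θ α) =
      q₀ * (Real.sin θ * Real.cosh (2 * L * mu0 q₀ h) * mu0 q₀ h +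
        (h * Real.cos α - q₀ * Real.cos θ) * Real.sinh (2 * L * mu0 q₀ h)) := by
  have hm := (mu0_pos q₀ h hq₀ hh).ne'
  unfold CMinus; field_simp

lemma ABr_plus (L q₀ h θ α : ℝ) (hq₀ : 0 < q₀) (hh : q₀ < h) :
    ABr L q₀ h θ α q₀ = -(((q₀ * (mu0 q₀ h * CPlus L q₀ h θ α)) : ℝ) : ℂ) := by
  unfold ABr nuB
  rw [kk_self q₀ hq₀.ne', lam_self q₀ hq₀.ne',
    show Real.sqrt (h ^ 2 - q₀ ^ 2) = mu0 q₀ h from rfl,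
    show 2 * (L : ℂ) * (Complex.I * ((mu0 q₀ h : ℝ) : ℂ))
        = ((2 * L * mu0 q₀ h : ℝ) : ℂ) * Complex.I by push_cast; ring,
    Complex.cos_mul_I, Complex.sin_mul_I, ← Complex.ofReal_cosh, ← Complex.ofReal_sinh,
    CPlus_aux L q₀ h θ α hq₀ hh]
  push_cast
  linear_combination (-((mu0 q₀ h : ℝ) : ℂ) * Complex.cosh (2 * (L:ℂ) * ((mu0 q₀ h : ℝ):ℂ)) *
      (q₀:ℂ) * Complex.sin (θ:ℂ) +
    Complex.sinh (2 * (L:ℂ) * ((mu0 q₀ h : ℝ):ℂ)) * (h:ℂ) * (q₀:ℂ) * Complex.cos (α:ℂ) -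
    Complex.sinh (2 * (L:ℂ) * ((mu0 q₀ h : ℝ):ℂ)) * (q₀:ℂ) ^ 2 * Complex.cos (θ:ℂ)) * Complex.I_sq

lemma BBr_plus (L q₀ h θ α : ℝ) (hq₀ : 0 < q₀) (hh : q₀ < h) :
    BBr L q₀ h θ α q₀ = Complex.I * (((q₀ * (mu0 q₀ h * CPlus L q₀ h θ α)) : ℝ) : ℂ) := by
  unfold BBr nuB
  rw [kk_self q₀ hq₀.ne', lam_self q₀ hq₀.ne',
    show Real.sqrt (h ^ 2 - q₀ ^ 2) = mu0 q₀ h from rfl,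
    show 2 * (L : ℂ) * (Complex.I * ((mu0 q₀ h : ℝ) : ℂ))
        = ((2 * L * mu0 q₀ h : ℝ) : ℂ) * Complex.I by push_cast; ring,
    Complex.cos_mul_I, Complex.sin_mul_I, ← Complex.ofReal_cosh, ← Complex.ofReal_sinh,
    CPlus_aux L q₀ h θ α hq₀ hh]
  push_cast
  ring

lemma ABr_minus (L q₀ h θ α : ℝ) (hq₀ : 0 < q₀) (hh : q₀ < h) :
    ABr L q₀ h θ α (-q₀) = -(((q₀ * (mu0 q₀ h * CMinus L q₀ h θ α)) : ℝ) : ℂ) := by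
  unfold ABr nuB
  rw [kk_neg_self q₀ hq₀.ne', lam_neg_self q₀ hq₀.ne',
    show (-q₀ : ℝ) ^ 2 = q₀ ^ 2 by ring,
    show Real.sqrt (h ^ 2 - q₀ ^ 2) = mu0 q₀ h from rfl,
    show 2 * (L : ℂ) * (Complex.I * ((mu0 q₀ h : ℝ) : ℂ))
        = ((2 * L * mu0 q₀ h : ℝ) : ℂ) * Complex.I by push_cast; ring,
    Complex.cos_mul_I, Complex.sin_mul_I, ← Complex.ofReal_cosh, ← Complex.ofReal_sinh,
    CMinus_aux L q₀ h θ α hq₀ hh]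
  push_cast
  linear_combination (((mu0 q₀ h : ℝ) : ℂ) * Complex.cosh (2 * (L:ℂ) * ((mu0 q₀ h : ℝ):ℂ)) *
      (q₀:ℂ) * Complex.sin (θ:ℂ) +
    Complex.sinh (2 * (L:ℂ) * ((mu0 q₀ h : ℝ):ℂ)) * (h:ℂ) * (q₀:ℂ) * Complex.cos (α:ℂ) -
    Complex.sinh (2 * (L:ℂ) * ((mu0 q₀ h : ℝ):ℂ)) * (q₀:ℂ) ^ 2 * Complex.cos (θ:ℂ)) * Complex.I_sq

lemma BBr_minus (L q₀ h θ α : ℝ) (hq₀ : 0 < q₀) (hh : q₀ < h) :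
    BBr L q₀ h θ α (-q₀) = -(Complex.I * (((q₀ * (mu0 q₀ h * CMinus L q₀ h θ α)) : ℝ) : ℂ)) := by
  unfold BBr nuB
  rw [kk_neg_self q₀ hq₀.ne', lam_neg_self q₀ hq₀.ne',
    show (-q₀ : ℝ) ^ 2 = q₀ ^ 2 by ring,
    show Real.sqrt (h ^ 2 - q₀ ^ 2) = mu0 q₀ h from rfl,
    show 2 * (L : ℂ) * (Complex.I * ((mu0 q₀ h : ℝ) : ℂ))
        = ((2 * L * mu0 q₀ h : ℝ) : ℂ) * Complex.I by push_cast; ring,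
    Complex.cos_mul_I, Complex.sin_mul_I, ← Complex.ofReal_cosh, ← Complex.ofReal_sinh,
    CMinus_aux L q₀ h θ α hq₀ hh]
  push_cast
  ring

lemma lam_ne (q₀ z : ℝ) (hz : z ≠ 0) (h1 : z ≠ q₀) (h2 : z ≠ -q₀) : lam q₀ z ≠ 0 := by
  intro h0
  unfold lam at h0
  rw [div_eq_zero_iff] at h0
  rcases h0 with h0 | h0
  · have h2' : z * z = q₀ ^ 2 := by
      field_simp at h0
      linarith [h0]
    have h3 : (z - q₀) * (z + q₀) = 0 := by linear_combination h2'
    rcases mul_eq_zero.mp h3 with h4 | h4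
    · exact h1 (by linarith)
    · exact h2 (by linarith)
  · norm_num at h0

lemma key_tendsto (L q₀ h θ α : ℝ) (hq₀ : 0 < q₀) (hh : q₀ < h) (μ : ℝ → ℂ)
    (hμ : ∀ z : ℝ, z ≠ 0 → (μ z) ^ 2 = (kk q₀ z : ℂ) ^ 2 - (h : ℂ) ^ 2)
    (z₀ : ℝ) (hz₀ : z₀ = q₀ ∨ z₀ = -q₀)
    (hA : ABr L q₀ h θ α z₀ ≠ 0) :
    Tendsto (fun z : ℝ => bBox L q₀ h θ α μ z / aBox L q₀ h θ α μ z) (𝓝[≠] z₀)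
      (𝓝 (BBr L q₀ h θ α z₀ / ABr L q₀ h θ α z₀ *
        Complex.exp (-(Complex.I * (θ : ℂ))))) := by
  have hz₀ne : z₀ ≠ 0 := by
    rcases hz₀ with h' | h' <;> subst h'
    · exact hq₀.ne'
    · exact neg_ne_zero.2 hq₀.ne'
  have hkkz₀ : kk q₀ z₀ ^ 2 = q₀ ^ 2 := by
    rcases hz₀ with h' | h'
    · rw [h', kk_self q₀ hq₀.ne']
    · rw [h', kk_neg_self q₀ hq₀.ne']; ring
  have hlamz₀ : lam q₀ z₀ = 0 := by
    rcases hz₀ with h' | h'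
    · rw [h']; exact lam_self q₀ hq₀.ne'
    · rw [h']; exact lam_neg_self q₀ hq₀.ne'
  have hck : ContinuousAt (fun z : ℝ => kk q₀ z) z₀ := by
    unfold kk; fun_prop (disch := exact hz₀ne)
  have hcl : ContinuousAt (fun z : ℝ => lam q₀ z) z₀ := by
    unfold lam; fun_prop (disch := exact hz₀ne)
  have hcν : ContinuousAt (fun z : ℝ => nuB q₀ h z) z₀ := by
    unfold nuB kk; fun_prop (disch := exact hz₀ne)
  have hcA : ContinuousAt (ABr L q₀ h θ α) z₀ := by
    unfold ABr nuB kk lam; fun_prop (disch := exact hz₀ne)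
  have hcB : ContinuousAt (BBr L q₀ h θ α) z₀ := by
    unfold BBr nuB kk lam; fun_prop (disch := exact hz₀ne)
  have hce : ContinuousAt
      (fun z : ℝ => Complex.exp (-(Complex.I * ((2 * L * lam q₀ z + θ : ℝ) : ℂ)))) z₀ := by
    unfold lam; fun_prop (disch := exact hz₀ne)
  have hmain : Tendsto
      (fun z : ℝ => BBr L q₀ h θ α z / ABr L q₀ h θ α z *
        Complex.exp (-(Complex.I * ((2 * L * lam q₀ z + θ : ℝ) : ℂ)))) (𝓝 z₀)
      (𝓝 (BBr L q₀ h θ α z₀ / ABr L q₀ h θ α z₀ *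
        Complex.exp (-(Complex.I * (θ : ℂ))))) := by
    have : Tendsto
        (fun z : ℝ => BBr L q₀ h θ α z / ABr L q₀ h θ α z *
          Complex.exp (-(Complex.I * ((2 * L * lam q₀ z + θ : ℝ) : ℂ)))) (𝓝 z₀)
        (𝓝 (BBr L q₀ h θ α z₀ / ABr L q₀ h θ α z₀ *
          Complex.exp (-(Complex.I * ((2 * L * lam q₀ z₀ + θ : ℝ) : ℂ))))) :=
      ((hcB.div hcA hA).mul hce).tendsto
    convert this using 3
    rw [hlamz₀]
    norm_num
  have hIoo : ∀ᶠ z in 𝓝 z₀, z ∈ Set.Ioo (z₀ - q₀) (z₀ + q₀) :=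
    Ioo_mem_nhds (by linarith) (by linarith)
  have hklt : ∀ᶠ z in 𝓝 z₀, kk q₀ z ^ 2 < h ^ 2 := by
    have hc2 : ContinuousAt (fun z : ℝ => kk q₀ z ^ 2) z₀ := hck.pow 2
    have hlt : kk q₀ z₀ ^ 2 < h ^ 2 := by rw [hkkz₀]; nlinarith
    exact hc2.eventually_lt continuousAt_const hlt
  refine Tendsto.congr' ?_ (hmain.mono_left nhdsWithin_le_nhds)
  filter_upwards [hIoo.filter_mono nhdsWithin_le_nhds, hklt.filter_mono nhdsWithin_le_nhds,
    self_mem_nhdsWithin] with z hz1 hz2 hzne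
  obtain ⟨hzl, hzr⟩ := hz1
  have hzfacts : z ≠ 0 ∧ z ≠ q₀ ∧ z ≠ -q₀ := by
    rcases hz₀ with h' | h' <;> rw [h'] at hzl hzr hzne
    · refine ⟨fun h0 => by rw [h0] at hzl; linarith, hzne,
        fun h0 => by rw [h0] at hzl; linarith⟩
    · refine ⟨fun h0 => by rw [h0] at hzr; linarith, fun h0 => by rw [h0] at hzr; linarith,
        hzne⟩
  obtain ⟨hz0, hzq, hznq⟩ := hzfacts
  exact (ratio_eq L q₀ h θ α μ z hz0 (hμ z hz0) hz2 (lam_ne q₀ z hz0 hzq hznq)).symm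

/-- the reflection coefficient `ρ = b/a` of the box initial condition
satisfies `ρ(±q₀) = ∓i e^{−iθ}` (as limits), provided `C± ≠ 0`. -/
theorem box_reflection_limit (L q₀ h θ α : ℝ) (hL : 0 ≤ L) (hq₀ : 0 < q₀)
    (hh : q₀ < h) (μ : ℝ → ℂ)
    (hμ : ∀ z : ℝ, z ≠ 0 → (μ z) ^ 2 = (kk q₀ z : ℂ) ^ 2 - (h : ℂ) ^ 2) :
    (CPlus L q₀ h θ α ≠ 0 →
      Tendsto (fun z : ℝ => bBox L q₀ h θ α μ z / aBox L q₀ h θ α μ z)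
        (𝓝[≠] q₀) (𝓝 (-Complex.I * Complex.exp (-(Complex.I * θ))))) ∧
    (CMinus L q₀ h θ α ≠ 0 →
      Tendsto (fun z : ℝ => bBox L q₀ h θ α μ z / aBox L q₀ h θ α μ z)
        (𝓝[≠] (-q₀)) (𝓝 (Complex.I * Complex.exp (-(Complex.I * θ))))) := by
  constructor
  · intro hC
    have hmC : q₀ * (mu0 q₀ h * CPlus L q₀ h θ α) ≠ 0 :=
      mul_ne_zero hq₀.ne' (mul_ne_zero (mu0_pos q₀ h hq₀ hh).ne' hC)
    have hmCc : (((q₀ * (mu0 q₀ h * CPlus L q₀ h θ α)) : ℝ) : ℂ) ≠ 0 :=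
      Complex.ofReal_ne_zero.2 hmC
    have hA : ABr L q₀ h θ α q₀ ≠ 0 := by
      rw [ABr_plus L q₀ h θ α hq₀ hh]
      exact neg_ne_zero.2 hmCc
    have ht := key_tendsto L q₀ h θ α hq₀ hh μ hμ q₀ (Or.inl rfl) hA
    have hval : BBr L q₀ h θ α q₀ / ABr L q₀ h θ α q₀ = -Complex.I := by
      rw [ABr_plus L q₀ h θ α hq₀ hh, BBr_plus L q₀ h θ α hq₀ hh,
        div_eq_iff (neg_ne_zero.2 hmCc)]
      ring
    rw [hval] at ht
    exact ht
  · intro hC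
    have hmC : q₀ * (mu0 q₀ h * CMinus L q₀ h θ α) ≠ 0 :=
      mul_ne_zero hq₀.ne' (mul_ne_zero (mu0_pos q₀ h hq₀ hh).ne' hC)
    have hmCc : (((q₀ * (mu0 q₀ h * CMinus L q₀ h θ α)) : ℝ) : ℂ) ≠ 0 :=
      Complex.ofReal_ne_zero.2 hmC
    have hA : ABr L q₀ h θ α (-q₀) ≠ 0 := by
      rw [ABr_minus L q₀ h θ α hq₀ hh]
      exact neg_ne_zero.2 hmCc
    have ht := key_tendsto L q₀ h θ α hq₀ hh μ hμ (-q₀) (Or.inr rfl) hA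
    have hval : BBr L q₀ h θ α (-q₀) / ABr L q₀ h θ α (-q₀) = Complex.I := by
      rw [ABr_minus L q₀ h θ α hq₀ hh, BBr_minus L q₀ h θ α hq₀ hh,
        div_eq_iff (neg_ne_zero.2 hmCc)]
      ring
    rw [hval] at ht
    exact ht
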